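/- arXiv:2009.12309 — 2 statements merged into one kernel-verified Lean document; each statement's English description precedes it below -/
import Mathlib

section
/- If G is a biconnected single-source level graph, then the graph G' obtained by adding an apex vertex t above the top level, connecting t to all vertices on the top level and adding the edge (s,t), is also biconnected and single-source. -/
open scoped Classical

/-- A directed graph on vertex type `V`, given by its edge relation. -/
structure DirGraph (V : Type) where
  E : V → V → Prop

namespace DirGraph
variable {V : Type}

/-- Underlying undirected adjacency. -/
def Adj (G : DirGraph V) (u v : V) : Prop := G.E u v ∨ G.E v u

def IsSource (G : DirGraph V) (s : V) : Prop := ∀ u, ¬ G.E u s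
def IsSink (G : DirGraph V) (t : V) : Prop := ∀ u, ¬ G.E t u
def UniqueSource (G : DirGraph V) (s : V) : Prop := G.IsSource s ∧ ∀ v, G.IsSource v → v = s
def UniqueSink (G : DirGraph V) (t : V) : Prop := G.IsSink t ∧ ∀ v, G.IsSink v → v = t
def Acyclic (G : DirGraph V) : Prop := ∀ v, ¬ Relation.TransGen G.E v v
/-- An st-graph: acyclic with a unique source `s` and a unique sink `t`. -/
def IsStGraph (G : DirGraph V) (s t : V) : Prop := G.Acyclic ∧ G.UniqueSource s ∧ G.UniqueSink t
/-- Directed reachability. -/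
def Reaches (G : DirGraph V) : V → V → Prop := Relation.ReflTransGen G.E

/-- Underlying simple graph. -/
def toSimple (G : DirGraph V) : SimpleGraph V where
  Adj a b := a ≠ b ∧ G.Adj a b
  symm := ⟨fun _ _ h => ⟨h.1.symm, Or.symm h.2⟩⟩
  loopless := ⟨fun _ h => h.1 rfl⟩

end DirGraph

/-- A graph is biconnected on a vertex set `S` if deleting any one vertex of `S`
leaves the graph induced on the rest of `S` connected. -/
def BiconnectedOn {V : Type} (H : SimpleGraph V) (S : Set V) : Prop :=
  ∀ x ∈ S, (H.induce (S \ {x})).Connected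

/-- A digraph is biconnected if its underlying undirected graph is 2-connected. -/
def DirGraph.Biconnected {V : Type} (G : DirGraph V) : Prop :=
  BiconnectedOn G.toSimple Set.univ

/-- A level graph: a digraph together with a level assignment that strictly
increases along every directed edge. -/
structure LevelGraph (V : Type) extends DirGraph V where
  lev : V → ℤ
  mono : ∀ u v, E u v → lev u < lev v

/-- A level-planar drawing: every vertex `v` is placed at the point `(x v, lev v)`,
every edge `(u,v)` is drawn as a continuous `y`-monotone curve (the graph of a
function `x = curve y` on `[lev u, lev v]`) joining its endpoints, distinct vertices
on a common level have distinct `x`-coordinates, and two distinct edge curves meet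
only at points corresponding to common endpoints. -/
structure LevelPlanarDrawing {V : Type} (G : LevelGraph V) where
  x : V → ℝ
  curve : ∀ u v, G.E u v → ℝ → ℝ
  curve_cont : ∀ u v (h : G.E u v),
    ContinuousOn (curve u v h) (Set.Icc (G.lev u : ℝ) (G.lev v : ℝ))
  curve_src : ∀ u v (h : G.E u v), curve u v h (G.lev u : ℝ) = x u
  curve_tgt : ∀ u v (h : G.E u v), curve u v h (G.lev v : ℝ) = x v
  inj_level : ∀ u v, u ≠ v → G.lev u = G.lev v → x u ≠ x v
  nocross : ∀ u v (h : G.E u v) u' v' (h' : G.E u' v'), (u, v) ≠ (u', v') →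
    ∀ y : ℝ, y ∈ Set.Icc (G.lev u : ℝ) (G.lev v : ℝ) →
      y ∈ Set.Icc (G.lev u' : ℝ) (G.lev v' : ℝ) →
      curve u v h y = curve u' v' h' y →
      ∃ w : V, (w = u ∨ w = v) ∧ (w = u' ∨ w = v') ∧ y = (G.lev w : ℝ)

/-- `G` is level planar if it admits a level-planar drawing. -/
def LevelGraph.LevelPlanar {V : Type} (G : LevelGraph V) : Prop :=
  Nonempty (LevelPlanarDrawing G)

/-- A (combinatorial) planar embedding of (the underlying undirected graph of) `G`:
a rotation system (the cyclic list `rot v` of neighbours around each vertex `v`,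
recorded as a list up to cyclic rotation) together with an abstract system of faces,
an outer face, and vertex/edge–face incidences. -/
structure PlanarEmbedding {V : Type} (G : DirGraph V) where
  rot : V → List V
  mem_rot : ∀ v w, w ∈ rot v ↔ G.Adj v w
  nodup_rot : ∀ v, (rot v).Nodup
  Face : Type
  outer : Face
  incV : V → Face → Prop
  incE : V → V → Face → Prop
  incE_symm : ∀ u v f, incE u v f → incE v u f
  incE_incV : ∀ u v f, incE u v f → incV u f ∧ incV v f
  incE_adj : ∀ u v f, incE u v f → G.Adj u v
  exists_face : ∀ u v, G.Adj u v → ∃ f, incE u v f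

/-- `a` is an apex of the face `f`: a vertex of maximum level incident to `f`. -/
def PlanarEmbedding.IsApex {V : Type} {G : LevelGraph V} (Γ : PlanarEmbedding G.toDirGraph)
    (a : V) (f : Γ.Face) : Prop :=
  Γ.incV a f ∧ ∀ w, Γ.incV w f → G.lev w ≤ G.lev a

/-- The level-planar drawing `D` realizes the combinatorial embedding `Γ`:
around every vertex `v` the rotation splits (up to cyclic rotation) into the block
of incoming edges ordered from left to right (as given by comparison of the curves
just below `v`) followed by the block of outgoing edges ordered from right to left
(comparison just above `v`). -/
def LevelPlanarDrawing.Realizes {V : Type} {G : LevelGraph V} (D : LevelPlanarDrawing G)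
    (Γ : PlanarEmbedding G.toDirGraph) : Prop :=
  ∀ v : V, ∃ lin lout : List V,
    (Γ.rot v).IsRotated (lin ++ lout) ∧
    (∀ u ∈ lin, G.E u v) ∧ (∀ u ∈ lout, G.E v u) ∧
    lin.Pairwise (fun a b => ∀ (ha : G.E a v) (hb : G.E b v),
      ∀ᶠ y in nhdsWithin (G.lev v : ℝ) (Set.Iio (G.lev v : ℝ)),
        D.curve a v ha y < D.curve b v hb y) ∧
    lout.Pairwise (fun a b => ∀ (ha : G.E v a) (hb : G.E v b),
      ∀ᶠ y in nhdsWithin (G.lev v : ℝ) (Set.Ioi (G.lev v : ℝ)),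
        D.curve v b hb y < D.curve v a ha y)

/-- A combinatorial embedding is level planar if some level-planar drawing realizes it. -/
def PlanarEmbedding.IsLevelPlanar {V : Type} {G : LevelGraph V}
    (Γ : PlanarEmbedding G.toDirGraph) : Prop :=
  ∃ D : LevelPlanarDrawing G, D.Realizes Γ

/-- The embedding `Γ'` of a supergraph `G'` of `G` (on the same vertex set) extends the
embedding `Γ` of `G`: deleting the new edges from every rotation yields `Γ`. -/
def RestrictsTo {V : Type} {G' G : DirGraph V}
    (Γ' : PlanarEmbedding G') (Γ : PlanarEmbedding G) : Prop :=
  ∀ v, ((Γ'.rot v).filter (fun u => decide (G.Adj v u))).IsRotated (Γ.rot v)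

/-- The graph `G'` obtained from a `k`-level graph `G` with source `s` by adding a new
apex vertex `t` (here `none`) on level `k+1`, edges from every vertex on level `k` to `t`,
and the edge `(s,t)`. -/
def extendApex {V : Type} (G : LevelGraph V) (k : ℤ) (s : V) (hk : ∀ v, G.lev v ≤ k) :
    LevelGraph (Option V) where
  E a b := (∃ u w, a = some u ∧ b = some w ∧ G.E u w) ∨
           (∃ u, a = some u ∧ b = none ∧ (G.lev u = k ∨ u = s))
  lev a := Option.casesOn a (k + 1) G.lev
  mono := by
    rintro a b (⟨u, w, rfl, rfl, h⟩ | ⟨u, rfl, rfl, h⟩)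
    · exact G.mono u w h
    · show G.lev u < k + 1
      have := hk u; omega

/-- If `G` is a biconnected single-source level graph (on levels up to
`k`, with some vertex on the top level `k`), then the graph `G'` obtained by adding an
apex `t` above the top level, connecting all top-level vertices to `t` and adding the
edge `(s,t)`, is again biconnected and single-source (with source `s`). -/
theorem statement_4 {V : Type} (G : LevelGraph V) (k : ℤ) (s : V)
    (hk : ∀ v, G.lev v ≤ k) (htop : ∃ v, G.lev v = k)
    (hs : G.toDirGraph.UniqueSource s)
    (hbic : G.toDirGraph.Biconnected) :
    (extendApex G k s hk).toDirGraph.Biconnected ∧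
      (extendApex G k s hk).toDirGraph.UniqueSource (some s) := by
  classical
  set G' := extendApex G k s hk with hG'
  -- every vertex has another vertex distinct from it
  have hne : ∀ x : V, ∃ y : V, y ≠ x := by
    intro x
    have h := hbic x (Set.mem_univ x)
    obtain ⟨⟨y, hy⟩⟩ := h.nonempty
    exact ⟨y, by simpa using hy.2⟩
  -- hom from an induced subgraph to the ambient graph
  let indHom : ∀ (H : SimpleGraph V) (S : Set V), H.induce S →g H :=
    fun H S => ⟨Subtype.val, fun {a b} h => h⟩
  -- G is connected
  have Gconn : G.toSimple.Connected := by
    haveI : Nonempty V := ⟨s⟩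
    constructor
    intro a b
    by_cases hab : a = b
    · subst hab; exact SimpleGraph.Reachable.refl a
    by_cases hz : ∃ z, z ≠ a ∧ z ≠ b
    · obtain ⟨z, hza, hzb⟩ := hz
      have h := hbic z (Set.mem_univ z)
      have ha : a ∈ (Set.univ \ {z} : Set V) := ⟨trivial, by simpa using hza.symm⟩
      have hb : b ∈ (Set.univ \ {z} : Set V) := ⟨trivial, by simpa using hzb.symm⟩
      have := h.preconnected ⟨a, ha⟩ ⟨b, hb⟩
      exact this.map (indHom _ _)
    · have hor : ∀ z : V, z = a ∨ z = b := by
        intro z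
        by_contra hc
        push_neg at hc
        exact hz ⟨z, hc.1, hc.2⟩
      have key : G.toSimple.Adj a b := by
        rcases hor s with hsa | hsb
        · -- s = a, so b ≠ s and b has an incoming edge
          have hbs : b ≠ s := fun h => hab (hsa ▸ h ▸ rfl)
          have hnsrc : ¬ G.toDirGraph.IsSource b := fun h => hbs (hs.2 b h)
          rw [DirGraph.IsSource] at hnsrc
          push_neg at hnsrc
          obtain ⟨w, hw⟩ := hnsrc
          have hwb : w ≠ b := fun h => by
            have := G.mono w b hw; rw [h] at this; omega
          rcases hor w with hwa | hwb'
          · exact ⟨hab, Or.inl (hwa ▸ hw)⟩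
          · exact absurd hwb' hwb
        · have has : a ≠ s := fun h => hab (h.trans hsb)
          have hnsrc : ¬ G.toDirGraph.IsSource a := fun h => has (hs.2 a h)
          rw [DirGraph.IsSource] at hnsrc
          push_neg at hnsrc
          obtain ⟨w, hw⟩ := hnsrc
          have hwa : w ≠ a := fun h => by
            have := G.mono w a hw; rw [h] at this; omega
          rcases hor w with hwa' | hwb
          · exact absurd hwa' hwa
          · exact ⟨hab, Or.inr (hwb ▸ hw)⟩
      exact key.reachable
  -- s has a neighbour in G
  have hnbrs : ∃ w, G.toSimple.Adj s w := by
    obtain ⟨w, hw⟩ := hne s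
    obtain ⟨p⟩ := Gconn.preconnected s w
    cases p with
    | nil => exact absurd rfl hw
    | cons h _ => exact ⟨_, h⟩
  -- for every v there is u ≠ v adjacent (in G') to the apex
  have htopne : ∀ v : V, ∃ u, u ≠ v ∧ (G.lev u = k ∨ u = s) := by
    intro v
    by_cases hvs : v = s
    · obtain ⟨w, hwk⟩ := htop
      by_cases hws : w = s
      · exfalso
        obtain ⟨u, hu⟩ := hnbrs
        rcases hu.2 with h | h
        · have h1 := G.mono _ _ h
          have h2 := hk u
          rw [hws] at hwk
          omega
        · exact hs.1 u h
      · exact ⟨w, fun h => hws (h.trans hvs), Or.inl hwk⟩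
    · exact ⟨s, fun h => hvs h.symm, Or.inr rfl⟩
  -- unique source
  have husrc : G'.toDirGraph.UniqueSource (some s) := by
    constructor
    · intro u h
      have h' : (∃ a b, u = some a ∧ (some s : Option V) = some b ∧ G.E a b) ∨
          (∃ a, u = some a ∧ (some s : Option V) = none ∧ (G.lev a = k ∨ a = s)) := h
      rcases h' with ⟨a, b, _, hb, hE⟩ | ⟨a, _, hb, _⟩
      · have hbs : b = s := (Option.some.inj hb).symm
        exact hs.1 a (hbs ▸ hE)
      · exact absurd hb (Option.some_ne_none s)
    · intro v hv
      cases v with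
      | none =>
        exact absurd (Or.inr ⟨s, rfl, rfl, Or.inr rfl⟩ :
          G'.toDirGraph.E (some s) none) (hv (some s))
      | some u =>
        by_contra hne'
        have hus : u ≠ s := fun h => hne' (by rw [h])
        have hnsrc : ¬ G.toDirGraph.IsSource u := fun h => hus (hs.2 u h)
        rw [DirGraph.IsSource] at hnsrc
        push_neg at hnsrc
        obtain ⟨w, hw⟩ := hnsrc
        exact hv (some w) (Or.inl ⟨w, u, rfl, rfl, hw⟩)
  refine ⟨?_, husrc⟩
  -- biconnectedness
  intro x _
  -- adjacency transfer
  have hAdjsome : ∀ a b : V, G.toSimple.Adj a b →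
      G'.toDirGraph.toSimple.Adj (some a) (some b) := by
    intro a b h
    refine ⟨fun hc => h.1 (Option.some.inj hc), ?_⟩
    rcases h.2 with he | he
    · exact Or.inl (Or.inl ⟨a, b, rfl, rfl, he⟩)
    · exact Or.inr (Or.inl ⟨b, a, rfl, rfl, he⟩)
  cases x with
  | none =>
    -- the induced graph on all `some` vertices ≅ G
    let hom1 : G.toSimple →g
        (G'.toDirGraph.toSimple.induce (Set.univ \ {(none : Option V)})) :=
      ⟨fun u => ⟨some u, ⟨trivial, by simp⟩⟩, fun {a b} h => hAdjsome a b h⟩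
    haveI : Nonempty ↑(Set.univ \ {(none : Option V)}) := ⟨⟨some s, ⟨trivial, by simp⟩⟩⟩
    constructor
    rintro ⟨a, ha⟩ ⟨b, hb⟩
    cases a with
    | none => exact absurd rfl ha.2
    | some a' =>
      cases b with
      | none => exact absurd rfl hb.2
      | some b' =>
        exact (Gconn.preconnected a' b').map hom1
  | some v =>
    obtain ⟨u₀, hu₀v, hu₀⟩ := htopne v
    have hmemn : (none : Option V) ∈ (Set.univ \ {(some v : Option V)}) :=
      ⟨trivial, by simp⟩
    have hmem : ∀ u : V, u ≠ v → (some u : Option V) ∈ (Set.univ \ {(some v : Option V)}) := by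
      intro u hu
      exact ⟨trivial, by simpa using fun h => hu (Option.some.inj h)⟩
    -- hom from G minus v into G' minus (some v)
    let hom2 : (G.toSimple.induce (Set.univ \ {v})) →g
        (G'.toDirGraph.toSimple.induce (Set.univ \ {(some v : Option V)})) :=
      ⟨fun u => ⟨some u.val, hmem u.val (fun h => u.prop.2 (by simp [h]))⟩,
        fun {a b} h => hAdjsome a.val b.val h⟩
    -- the apex is adjacent to some u₀
    have hadj0 : (G'.toDirGraph.toSimple.induce
        (Set.univ \ {(some v : Option V)})).Adj ⟨some u₀, hmem u₀ hu₀v⟩ ⟨none, hmemn⟩ := by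
      refine ⟨by simp, Or.inl (Or.inr ⟨u₀, rfl, rfl, hu₀⟩)⟩
    have hdelconn := hbic v (Set.mem_univ v)
    -- reachability of `some` vertices to the apex-side base point
    have hreach : ∀ (u : V) (hu : u ≠ v),
        (G'.toDirGraph.toSimple.induce (Set.univ \ {(some v : Option V)})).Reachable
          ⟨some u, hmem u hu⟩ ⟨none, hmemn⟩ := by
      intro u hu
      have h1 := hdelconn.preconnected ⟨u, ⟨trivial, by simpa using hu⟩⟩
        ⟨u₀, ⟨trivial, by simpa using hu₀v⟩⟩
      have h2 : (G'.toDirGraph.toSimple.induce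
          (Set.univ \ {(some v : Option V)})).Reachable
          ⟨some u, hmem u hu⟩ ⟨some u₀, hmem u₀ hu₀v⟩ := h1.map hom2
      exact h2.trans hadj0.reachable
    haveI : Nonempty ↑(Set.univ \ {(some v : Option V)}) := ⟨⟨none, hmemn⟩⟩
    constructor
    rintro ⟨a, ha⟩ ⟨b, hb⟩
    cases a with
    | none =>
      cases b with
      | none => exact SimpleGraph.Reachable.refl _
      | some b' =>
        have hbv : b' ≠ v := fun h => hb.2 (by simp [h])
        exact (hreach b' hbv).symm
    | some a' =>
      have hav : a' ≠ v := fun h => ha.2 (by simp [h])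
      cases b with
      | none => exact hreach a' hav
      | some b' =>
        have hbv : b' ≠ v := fun h => hb.2 (by simp [h])
        exact (hreach a' hav).trans (hreach b' hbv).symm
end

section
/- In any directed acyclic graph with a single source, every vertex that is not the source is reachable from the source; in particular, for any two vertices u and v there exists a vertex w together with two directed paths from w to u and from w to v that are vertex-disjoint except at w. -/
open scoped Classical

/-- `l` is a directed path in `G` from `w` to `u` (a nonempty list of vertices starting
at `w`, ending at `u`, consecutive vertices joined by directed edges). -/
def DipathFrom {V : Type} (G : DirGraph V) (w u : V) (l : List V) : Prop :=
  l.Chain' G.E ∧ l.head? = some w ∧ l.getLast? = some u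

section Aux

variable {V : Type} {G : DirGraph V}

lemma dipath_snoc {w u c : V} {l : List V} (h : DipathFrom G w u l) (e : G.E u c) :
    DipathFrom G w c (l ++ [c]) := by
  obtain ⟨hc, hh, hl⟩ := h
  refine ⟨?_, ?_, ?_⟩
  · show List.IsChain G.E (l ++ [c]); rw [List.isChain_append]
    refine ⟨hc, List.isChain_singleton _, ?_⟩
    intro x hx y hy
    simp only [List.head?_cons, Option.mem_def, Option.some.injEq] at hy
    rw [hl] at hx
    simp only [Option.mem_def, Option.some.injEq] at hx
    subst hx; subst hy; exact e
  · cases l with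
    | nil => simp at hh
    | cons a t => simpa using hh
  · simp [List.getLast?_append]

lemma reaches_dipath {w u : V} (h : G.Reaches w u) : ∃ l, DipathFrom G w u l := by
  induction h with
  | refl => exact ⟨[w], List.isChain_singleton _, rfl, rfl⟩
  | tail _ e ih =>
    obtain ⟨l, hl⟩ := ih
    exact ⟨l ++ [_], dipath_snoc hl e⟩

lemma chain_mem_reach : ∀ (q : List V), q.Chain' G.E → ∀ u v : V, u ∈ q →
    q.getLast? = some v → G.Reaches u v := by
  intro q
  induction q with
  | nil => intro _ u v h; simp at h
  | cons a t ih =>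
    intro hc u v hu hl
    cases t with
    | nil =>
      simp at hu hl
      subst hu; subst hl; exact Relation.ReflTransGen.refl
    | cons b t' =>
      have hc' : (b :: t').Chain' G.E := (List.isChain_cons.mp hc).2
      have hab : G.E a b := (List.isChain_cons_cons.mp hc).1
      have hl' : (b :: t').getLast? = some v := by
        rw [← hl]; simp [List.getLast?_cons_cons]
      rcases List.mem_cons.mp hu with h | h
      · subst h
        exact Relation.ReflTransGen.head hab (ih hc' b v List.mem_cons_self hl')
      · exact ih hc' u v h hl'

lemma wf_of_acyclic [Finite V] (hacyc : G.Acyclic) : WellFounded G.E := by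
  have h : WellFounded (Relation.TransGen G.E) := by
    have : IsIrrefl V (Relation.TransGen G.E) := ⟨hacyc⟩
    have : IsTrans V (Relation.TransGen G.E) := ⟨fun _ _ _ => Relation.TransGen.trans⟩
    exact Finite.wellFounded_of_trans_of_irrefl _
  exact Subrelation.wf (fun {a b} h => Relation.TransGen.single h) h

end Aux

/-- In a (finite) directed acyclic graph with a single source `s`,
every vertex is reachable from `s`; in particular, for any two vertices `u`, `v` there
is a vertex `w` and directed paths from `w` to `u` and from `w` to `v` that share only
the vertex `w`. -/
theorem statement_7 {V : Type} [Finite V] (G : DirGraph V) (s : V)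
    (hacyc : G.Acyclic) (hs : G.UniqueSource s) :
    (∀ v, G.Reaches s v) ∧
    ∀ u v : V, ∃ (w : V) (p q : List V),
      DipathFrom G w u p ∧ DipathFrom G w v q ∧
      ∀ x, x ∈ p → x ∈ q → x = w := by
  have wf := wf_of_acyclic (G := G) hacyc
  have hreach : ∀ v, G.Reaches s v := by
    intro v
    induction v using WellFounded.induction wf with
    | _ v ih =>
      by_cases hv : G.IsSource v
      · rw [hs.2 v hv]
        exact Relation.ReflTransGen.refl
      · simp only [DirGraph.IsSource, not_forall, not_not] at hv
        obtain ⟨u, hu⟩ := hv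
        exact Relation.ReflTransGen.tail (ih u hu) hu
  refine ⟨hreach, ?_⟩
  intro u
  induction u using WellFounded.induction wf with
  | _ u ih =>
    intro v
    by_cases hu : G.IsSource u
    · have : u = s := hs.2 u hu
      subst this
      obtain ⟨q, hq⟩ := reaches_dipath (hreach v)
      refine ⟨u, [u], q, ⟨List.isChain_singleton _, rfl, rfl⟩, hq, ?_⟩
      intro x hx _
      simpa using hx
    · simp only [DirGraph.IsSource, not_forall, not_not] at hu
      obtain ⟨u', hu'⟩ := hu
      obtain ⟨w, p, q, hp, hq, hdisj⟩ := ih u' hu' v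
      by_cases hmem : u ∈ q
      · have hr : G.Reaches u v := chain_mem_reach q hq.1 u v hmem hq.2.2
        obtain ⟨q', hq'⟩ := reaches_dipath hr
        refine ⟨u, [u], q', ⟨List.isChain_singleton _, rfl, rfl⟩, hq', ?_⟩
        intro x hx _
        simpa using hx
      · refine ⟨w, p ++ [u], q, dipath_snoc hp hu', hq, ?_⟩
        intro x hx hxq
        rcases List.mem_append.mp hx with h | h
        · exact hdisj x h hxq
        · simp only [List.mem_singleton] at h
          subst h; exact absurd hxq hmem
end
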